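/- Let μ, λ ∈ ℤⁿ be dominant coweights with λ = μ + ϖ_t for some t ∈ {1,...,n-1}. Then for any λ-permissible alcove x, there exists a μ-permissible alcove y such that x is in relative position ϖ_t with respect to y, i.e., dom(x^{(i)} - y^{(i)}) = ϖ_t for all 1 ≤ i ≤ n. -/

import Mathlib

open Finset

/-- Standard basis vector `e_j` in `ℤⁿ`. -/
def ev (n : ℕ) (j : Fin n) : Fin n → ℤ := fun k => if k = j then 1 else 0

/-- The coweight `ϖ_t = e_1 + ⋯ + e_t` (t ones followed by zeros). -/
def varpi (n t : ℕ) : Fin n → ℤ := fun j => if (j : ℕ) < t then 1 else 0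

/-- Dominance order `μ ⪯ λ`: equal total sums, partial sums of `μ` bounded by those of `λ`. -/
def DomLE {n : ℕ} (μ lam : Fin n → ℤ) : Prop :=
  (∑ i, μ i = ∑ i, lam i) ∧
  ∀ k : Fin n, ∑ i ∈ Finset.Iic k, μ i ≤ ∑ i ∈ Finset.Iic k, lam i

/-- A coweight is dominant iff its coordinates are weakly decreasing. -/
def IsDominant {n : ℕ} (v : Fin n → ℤ) : Prop := ∀ i j : Fin n, i ≤ j → v j ≤ v i

/-- The weakly decreasing rearrangement `dom(v)` of `v`. -/
noncomputable def domOf {n : ℕ} (v : Fin n → ℤ) : Fin n → ℤ :=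
  v ∘ Tuple.sort (fun i => -v i)

/-- `succA x i` is `x^{(i+1)}`, with the convention `x^{(n+1)} = x^{(1)} + (1,…,1)`. -/
def succA {n : ℕ} (x : Fin n → Fin n → ℤ) (i : Fin n) : Fin n → ℤ :=
  if h : (i : ℕ) + 1 < n then x ⟨(i : ℕ) + 1, h⟩ else fun j => x ⟨0, i.pos⟩ j + 1

/-- A tuple `(x^{(1)},…,x^{(n)})` is an alcove. -/
def IsAlcove {n : ℕ} (x : Fin n → Fin n → ℤ) : Prop :=
  (∀ i : Fin n, ∀ j, x i j ≤ succA x i j) ∧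
  (∀ i : Fin n, (i : ℕ) + 1 < n → ∑ j, succA x i j = (∑ j, x i j) + 1)

/-- `P` is the permutation `P(x)` of the alcove `x`: `x^{(i+1)} = x^{(i)} + e_{P(x)(i)}`. -/
def IsPermOf {n : ℕ} (x : Fin n → Fin n → ℤ) (P : Equiv.Perm (Fin n)) : Prop :=
  ∀ i : Fin n, ∀ j, succA x i j = x i j + ev n (P i) j

/-- A permutation acts on `ℤⁿ` by permuting coordinates: `(σv)_{σ(i)} = v_i`. -/
def permAct {n : ℕ} (σ : Equiv.Perm (Fin n)) (v : Fin n → ℤ) : Fin n → ℤ :=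
  fun j => v (σ.symm j)

/-- The `n`-cycle `c = (1 2 ⋯ n)`. -/
def cyc (n : ℕ) [NeZero n] : Equiv.Perm (Fin n) := Equiv.addRight 1

/-- Rotation of alcoves. -/
def rotA {n : ℕ} [NeZero n] (x : Fin n → Fin n → ℤ) : Fin n → Fin n → ℤ := fun i =>
  if h : (i : ℕ) + 1 < n then
    permAct (cyc n)⁻¹ (fun j => x ⟨(i : ℕ) + 1, h⟩ j - varpi n 1 j)
  else
    fun j => permAct (cyc n)⁻¹ (x 0) j + varpi n (n - 1) j

/-- An alcove is `λ`-permissible if `dom(x^{(i)} - ϖ_{i-1}) ⪯ λ` for all `i`. -/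
noncomputable def Permissible {n : ℕ} (lam : Fin n → ℤ) (x : Fin n → Fin n → ℤ) : Prop :=
  ∀ i : Fin n, DomLE (domOf (fun j => x i j - varpi n (i : ℕ) j)) lam

/-- The Kottwitz–Rapoport relation `i ⊴_x j` (six-case rule). -/
def TriLE {n : ℕ} (x : Fin n → Fin n → ℤ) (P : Equiv.Perm (Fin n)) (i j : Fin n) : Prop :=
  (x ⟨0, i.pos⟩ j < x ⟨0, i.pos⟩ i) ∨
  (x ⟨0, i.pos⟩ i = x ⟨0, i.pos⟩ j ∧
    ((P.symm i < i ∧ P.symm j < j ∧ j ≤ i) ∨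
     (P.symm i < i ∧ j ≤ P.symm j) ∨
     (P.symm i = i ∧ P.symm j = j ∧ i = j) ∨
     (P.symm i = i ∧ j < P.symm j) ∨
     (i < P.symm i ∧ j < P.symm j ∧ j ≤ i)))
-- ============ auxiliary lemmas ============
section Aux
variable {n : ℕ}

/-- card of the set of indices with value < m -/
lemma card_filter_val_lt (m : ℕ) :
    (univ.filter (fun j : Fin n => (j : ℕ) < m)).card = min m n := by
  classical
  rcases le_or_gt n m with h | h
  · rw [filter_true_of_mem (fun j _ => lt_of_lt_of_le j.isLt h)]
    simp [min_eq_right h]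
  · have : (univ.filter (fun j : Fin n => (j : ℕ) < m)) = Finset.Iio ⟨m, h⟩ := by
      ext j; simp [Fin.lt_def]
    rw [this, Fin.card_Iio]
    simp [min_eq_left h.le]

lemma domOf_antitone (v : Fin n → ℤ) : ∀ a b : Fin n, a ≤ b → domOf v b ≤ domOf v a := by
  intro a b hab
  have := Tuple.monotone_sort (fun i => -v i) hab
  simpa [domOf] using this

lemma sum_domOf (v : Fin n → ℤ) : ∑ j, domOf v j = ∑ j, v j := by
  unfold domOf
  exact Equiv.sum_comp (Tuple.sort fun i => -v i) v

/-- sorted prefix dominates subset sums -/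
lemma sum_le_prefix (d : Fin n → ℤ) (hd : ∀ a b : Fin n, a ≤ b → d b ≤ d a)
    (B : Finset (Fin n)) :
    ∑ j ∈ B, d j ≤ ∑ j ∈ univ.filter (fun j : Fin n => (j : ℕ) < B.card), d j := by
  classical
  set C := univ.filter (fun j : Fin n => (j : ℕ) < B.card) with hC
  have hcardC : C.card = B.card := by
    rw [hC, card_filter_val_lt, min_eq_left (B.card_le_univ.trans_eq (by simp))]
  have hsplitB : ∑ j ∈ B, d j = ∑ j ∈ B \ C, d j + ∑ j ∈ B ∩ C, d j := by
    rw [← Finset.sum_union (Finset.sdiff_disjoint.mono_right Finset.inter_subset_right)]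
    congr 1
    rw [Finset.sdiff_union_inter]
  have hsplitC : ∑ j ∈ C, d j = ∑ j ∈ C \ B, d j + ∑ j ∈ C ∩ B, d j := by
    rw [← Finset.sum_union (Finset.sdiff_disjoint.mono_right Finset.inter_subset_right)]
    congr 1
    rw [Finset.sdiff_union_inter]
  have hint : B ∩ C = C ∩ B := Finset.inter_comm _ _
  have hcards : (B \ C).card = (C \ B).card := by
    have h1 := Finset.card_sdiff_add_card_inter B C
    have h2 := Finset.card_sdiff_add_card_inter C B
    rw [hint] at h1
    omega
  rw [hsplitB, hsplitC, hint]
  have hmain : ∑ j ∈ B \ C, d j ≤ ∑ j ∈ C \ B, d j := by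
    rcases Finset.eq_empty_or_nonempty (C \ B) with he | hne
    · have : B \ C = ∅ := Finset.card_eq_zero.mp (by rw [hcards, he, Finset.card_empty])
      simp [this, he]
    · set cm := (C \ B).max' hne with hcm
      have hcmC : cm ∈ C := (Finset.mem_sdiff.mp ((C \ B).max'_mem hne)).1
      have hcmlt : (cm : ℕ) < B.card := by
        have := Finset.mem_filter.mp hcmC
        exact this.2
      calc ∑ j ∈ B \ C, d j ≤ (B \ C).card • d cm := by
            apply Finset.sum_le_card_nsmul
            intro x hx
            apply hd
            have hxC : x ∉ C := (Finset.mem_sdiff.mp hx).2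
            have : ¬ ((x : ℕ) < B.card) := fun h => hxC (Finset.mem_filter.mpr ⟨Finset.mem_univ _, h⟩)
            exact Fin.le_def.mpr (by omega)
        _ = (C \ B).card • d cm := by rw [hcards]
        _ ≤ ∑ j ∈ C \ B, d j := by
            apply Finset.card_nsmul_le_sum
            intro x hx
            exact hd x cm (Finset.le_max' _ _ hx)
  omega

/-- subset sums are bounded by prefix sums of lam when dom(v) ⪯ lam -/
lemma subset_sum_le (v lam : Fin n → ℤ) (h : DomLE (domOf v) lam) (A : Finset (Fin n)) :
    ∑ j ∈ A, v j ≤ ∑ j ∈ univ.filter (fun j : Fin n => (j : ℕ) < A.card), lam j := by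
  classical
  rcases Finset.eq_empty_or_nonempty A with he | hne
  · simp [he]
  have hm1 : 1 ≤ A.card := Finset.card_pos.mpr hne
  have hmn : A.card ≤ n := A.card_le_univ.trans_eq (by simp)
  set σ := Tuple.sort (fun i => -v i) with hσ
  set B := A.image σ.symm with hB
  have hcardB : B.card = A.card := Finset.card_image_of_injective _ σ.symm.injective
  have h1 : ∑ j ∈ A, v j = ∑ j ∈ B, domOf v j := by
    rw [hB, Finset.sum_image (fun a _ b _ h => σ.symm.injective h)]
    apply Finset.sum_congr rfl
    intro a _
    simp [domOf, hσ]
  have h2 := sum_le_prefix (domOf v) (domOf_antitone v) B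
  have hfe : (univ.filter (fun j : Fin n => (j : ℕ) < A.card)) =
      Finset.Iic (⟨A.card - 1, by omega⟩ : Fin n) := by
    ext j; simp [Fin.le_def]; omega
  rw [hcardB, hfe] at h2
  rw [h1, hfe]
  exact h2.trans (h.2 _)

end Aux

section Removal
variable {n : ℕ}

/-- prefix sums of μ -/
noncomputable def Mpre (μ : Fin n → ℤ) (m : ℕ) : ℤ :=
  ∑ j ∈ univ.filter (fun j : Fin n => (j : ℕ) < m), μ j

lemma Mpre_diff_ge (μ : Fin n → ℤ) (hμ : IsDominant μ) (a k : ℕ) (hak : a ≤ k) (hk1 : 1 ≤ k)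
    (hkn : k ≤ n) :
    Mpre μ a + (k - a : ℕ) • μ ⟨k - 1, by omega⟩ ≤ Mpre μ k := by
  classical
  have hsub : (univ.filter (fun j : Fin n => (j : ℕ) < a)) ⊆
      (univ.filter (fun j : Fin n => (j : ℕ) < k)) := by
    intro j hj; simp only [mem_filter, mem_univ, true_and] at *; omega
  have hsplit : Mpre μ k = Mpre μ a +
      ∑ j ∈ (univ.filter (fun j : Fin n => (j : ℕ) < k)) \
        (univ.filter (fun j : Fin n => (j : ℕ) < a)), μ j := by
    unfold Mpre
    rw [add_comm, Finset.sum_sdiff hsub]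
  rw [hsplit]
  have hcard : ((univ.filter (fun j : Fin n => (j : ℕ) < k)) \
      (univ.filter (fun j : Fin n => (j : ℕ) < a))).card = k - a := by
    rw [Finset.card_sdiff_of_subset hsub, card_filter_val_lt, card_filter_val_lt]
    omega
  have : (k - a : ℕ) • μ ⟨k - 1, by omega⟩ ≤ ∑ j ∈ (univ.filter (fun j : Fin n => (j : ℕ) < k)) \
      (univ.filter (fun j : Fin n => (j : ℕ) < a)), μ j := by
    rw [← hcard]
    apply Finset.card_nsmul_le_sum
    intro j hj
    simp only [Finset.mem_sdiff, mem_filter, mem_univ, true_and] at hj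
    exact hμ j ⟨k - 1, by omega⟩ (Fin.le_def.mpr (show (j : ℕ) ≤ k - 1 by omega))
  omega

lemma Mpre_diff_le (μ : Fin n → ℤ) (hμ : IsDominant μ) (k u : ℕ) (hku : k ≤ u) (hk1 : 1 ≤ k)
    (hun : u ≤ n) :
    Mpre μ u ≤ Mpre μ k + (u - k : ℕ) • μ ⟨k - 1, by omega⟩ := by
  classical
  have hsub : (univ.filter (fun j : Fin n => (j : ℕ) < k)) ⊆
      (univ.filter (fun j : Fin n => (j : ℕ) < u)) := by
    intro j hj; simp only [mem_filter, mem_univ, true_and] at *; omega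
  have hsplit : Mpre μ u = Mpre μ k +
      ∑ j ∈ (univ.filter (fun j : Fin n => (j : ℕ) < u)) \
        (univ.filter (fun j : Fin n => (j : ℕ) < k)), μ j := by
    unfold Mpre
    rw [add_comm, Finset.sum_sdiff hsub]
  rw [hsplit]
  have hcard : ((univ.filter (fun j : Fin n => (j : ℕ) < u)) \
      (univ.filter (fun j : Fin n => (j : ℕ) < k))).card = u - k := by
    rw [Finset.card_sdiff_of_subset hsub, card_filter_val_lt, card_filter_val_lt]
    omega
  have : ∑ j ∈ (univ.filter (fun j : Fin n => (j : ℕ) < u)) \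
      (univ.filter (fun j : Fin n => (j : ℕ) < k)), μ j ≤ (u - k : ℕ) • μ ⟨k - 1, by omega⟩ := by
    rw [← hcard]
    apply Finset.sum_le_card_nsmul
    intro j hj
    simp only [Finset.mem_sdiff, mem_filter, mem_univ, true_and] at hj
    exact hμ ⟨k - 1, by omega⟩ j (Fin.le_def.mpr (show k - 1 ≤ (j : ℕ) by omega))
  omega

/-- The key removal lemma: subtracting the indicator of a top-t set. -/
lemma removal (μ : Fin n → ℤ) (t : ℕ) (hμ : IsDominant μ) (ht : 1 ≤ t)
    (v : Fin n → ℤ) (S : Finset (Fin n)) (hS : S.card = t)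
    (htop : ∀ j ∈ S, ∀ k, k ∉ S → v k ≤ v j)
    (hbound : ∀ A : Finset (Fin n), ∑ j ∈ A, v j ≤ Mpre μ A.card + min A.card t)
    (A : Finset (Fin n)) :
    ∑ j ∈ A, (v j - if j ∈ S then 1 else 0) ≤ Mpre μ A.card := by
  classical
  have htn : t ≤ n := hS ▸ (S.card_le_univ.trans_eq (by simp))
  set a := (A ∩ S).card with ha
  set k := A.card with hk
  have hka : a ≤ k := Finset.card_le_card Finset.inter_subset_left
  have hkn : k ≤ n := A.card_le_univ.trans_eq (by simp)
  have hat : a ≤ t := hS ▸ Finset.card_le_card Finset.inter_subset_right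
  have hsumind : ∑ j ∈ A, (if j ∈ S then (1 : ℤ) else 0) = a := by
    rw [Finset.sum_ite_mem]
    simp [ha]
  have hsplit : ∑ j ∈ A, (v j - if j ∈ S then 1 else 0) = ∑ j ∈ A, v j - a := by
    rw [Finset.sum_sub_distrib, hsumind]
  rw [hsplit]
  rcases le_or_gt (min k t) a with hc | hc
  · have hb := hbound A
    rw [← hk] at hb
    omega
  -- a < min k t : so a < t and a < k
  have hk1 : 1 ≤ k := by omega
  set q := μ ⟨k - 1, by omega⟩ with hq
  have hcardAS : (A \ S).card = k - a := by
    have := Finset.card_sdiff_add_card_inter A S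
    omega
  have hcardSA : (S \ A).card = t - a := by
    have := Finset.card_sdiff_add_card_inter S A
    rw [Finset.inter_comm] at this
    omega
  have hsplitv : ∑ j ∈ A, v j = ∑ j ∈ A ∩ S, v j + ∑ j ∈ A \ S, v j :=
    (Finset.sum_inter_add_sum_sdiff A S v).symm
  by_cases hsmall : ∀ j ∈ A \ S, v j ≤ q
  · -- all outside values small
    have h1 : ∑ j ∈ A ∩ S, v j ≤ Mpre μ a + a := by
      have := hbound (A ∩ S)
      rw [← ha] at this
      omega
    have h2 : ∑ j ∈ A \ S, v j ≤ (k - a : ℕ) • q := by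
      rw [← hcardAS]
      exact Finset.sum_le_card_nsmul _ _ _ hsmall
    have h3 := Mpre_diff_ge μ hμ a k hka hk1 hkn
    rw [nsmul_eq_mul] at h2 h3
    linarith
  · push_neg at hsmall
    obtain ⟨j0, hj0A, hj0⟩ := hsmall
    have hj0S : j0 ∉ S := (Finset.mem_sdiff.mp hj0A).2
    have hq1 : ∀ j ∈ S \ A, q + 1 ≤ v j := by
      intro j hj
      have := htop j (Finset.mem_sdiff.mp hj).1 j0 hj0S
      omega
    set u := (A ∪ S).card with hu
    have huval : u + a = k + t := by
      rw [hu, ha, hk, ← hS]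
      exact Finset.card_union_add_card_inter A S
    have hun : u ≤ n := (A ∪ S).card_le_univ.trans_eq (by simp)
    have hut : t ≤ u := hS ▸ Finset.card_le_card Finset.subset_union_right
    have h1 : ∑ j ∈ A ∪ S, v j ≤ Mpre μ u + t := by
      have := hbound (A ∪ S)
      rw [← hu] at this
      omega
    have h2 : ∑ j ∈ A ∪ S, v j = ∑ j ∈ A, v j + ∑ j ∈ S \ A, v j := by
      rw [← Finset.union_sdiff_self_eq_union]
      exact Finset.sum_union Finset.disjoint_sdiff
    have h3 : (t - a : ℕ) • (q + 1) ≤ ∑ j ∈ S \ A, v j := by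
      rw [← hcardSA]
      exact Finset.card_nsmul_le_sum _ _ _ hq1
    have h4 := Mpre_diff_le μ hμ k u (by omega) hk1 hun
    have huk : u - k = t - a := by omega
    rw [huk] at h4
    rw [nsmul_eq_mul] at h3 h4
    have hc : ((t - a : ℕ) : ℤ) = (t : ℤ) - (a : ℤ) := by
      push_cast [Nat.cast_sub hat]
      ring
    have hexp : ((t - a : ℕ) : ℤ) * (q + 1) = ((t - a : ℕ) : ℤ) * q + ((t - a : ℕ) : ℤ) := by ring
    rw [hexp] at h3
    linarith

/-- domOf of the indicator of a t-element set is varpi t -/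
lemma domOf_indicator (S : Finset (Fin n)) (t : ℕ) (hS : S.card = t) :
    domOf (fun j => if j ∈ S then (1 : ℤ) else 0) = varpi n t := by
  classical
  set g : Fin n → ℤ := fun j => if j ∈ S then (1 : ℤ) else 0 with hg
  set d := domOf g with hd
  have hanti := domOf_antitone g
  have hval : ∀ j, d j = 0 ∨ d j = 1 := by
    intro j
    rcases em ((Tuple.sort (fun i => -g i)) j ∈ S) with h | h
    · right; show g _ = 1; exact if_pos h
    · left; show g _ = 0; exact if_neg h
  have hones : (univ.filter (fun j => d j = 1)).card = t := by
    have : (univ.filter (fun j => d j = 1)) =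
        (univ.filter (fun j => g j = 1)).image (Tuple.sort (fun i => -g i)).symm := by
      ext j
      simp only [mem_filter, mem_univ, true_and, Finset.mem_image]
      constructor
      · intro hj
        exact ⟨Tuple.sort (fun i => -g i) j, hj, Equiv.symm_apply_apply _ _⟩
      · rintro ⟨m, hm, rfl⟩
        show g (Tuple.sort (fun i => -g i) ((Tuple.sort (fun i => -g i)).symm m)) = 1
        rwa [Equiv.apply_symm_apply]
    rw [this, Finset.card_image_of_injective _ (Equiv.injective _)]
    have : (univ.filter (fun j => g j = 1)) = S := by
      ext j
      simp only [mem_filter, mem_univ, true_and, hg]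
      split_ifs with h <;> simp [h]
    rw [this, hS]
  funext j
  show d j = varpi n t j
  unfold varpi
  split_ifs with hj
  · -- j.val < t : show d j = 1
    by_contra hne
    have hdj : d j = 0 := (hval j).resolve_right hne
    have hsub : (univ.filter (fun m => d m = 1)) ⊆ Finset.Iio j := by
      intro m hm
      simp only [mem_filter] at hm
      rw [Finset.mem_Iio]
      by_contra hmj
      have : d m ≤ d j := hanti j m (not_lt.mp hmj)
      omega
    have := Finset.card_le_card hsub
    rw [hones, Fin.card_Iio] at this
    omega
  · by_contra hne
    have hdj : d j = 1 := by
      rcases hval j with h | h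
      · exact absurd h hne
      · exact h
    have hsub : Finset.Iic j ⊆ (univ.filter (fun m => d m = 1)) := by
      intro m hm
      rw [Finset.mem_Iic] at hm
      simp only [mem_filter, mem_univ, true_and]
      have h1 : d j ≤ d m := hanti m j hm
      rcases hval m with h | h
      · omega
      · exact h
    have := Finset.card_le_card hsub
    rw [hones, Fin.card_Iic] at this
    omega

end Removal

section Alcove
variable {n : ℕ}

lemma exists_ind (d : Fin n → ℤ) (h0 : ∀ j, 0 ≤ d j) (h1 : ∑ j, d j = 1) :
    ∃ p : Fin n, ∀ j, d j = if j = p then 1 else 0 := by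
  classical
  have hex : ∃ p : Fin n, 1 ≤ d p := by
    by_contra hc
    push_neg at hc
    have hz : ∀ j, d j = 0 := fun j => le_antisymm (by have := hc j; omega) (h0 j)
    rw [Finset.sum_congr rfl (fun j _ => hz j)] at h1
    simp at h1
  obtain ⟨p, hp⟩ := hex
  have hsplit : d p + ∑ j ∈ univ.erase p, d j = 1 := by
    rw [Finset.add_sum_erase univ d (mem_univ p)]; exact h1
  have hnn : 0 ≤ ∑ j ∈ univ.erase p, d j := Finset.sum_nonneg fun j _ => h0 j
  have hdp : d p = 1 := by
    have hle : d p ≤ 1 := by omega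
    omega
  have hze : ∑ j ∈ univ.erase p, d j = 0 := by omega
  have hall := (Finset.sum_eq_zero_iff_of_nonneg (fun j _ => h0 j)).mp hze
  refine ⟨p, fun j => ?_⟩
  by_cases hjp : j = p
  · simp [hjp, hdp]
  · simp [hjp, hall j (Finset.mem_erase.mpr ⟨hjp, mem_univ j⟩)]

variable (x : Fin n → Fin n → ℤ)

lemma sum_lvl (hx : IsAlcove x) (h0 : 0 < n) : ∀ m (h : m < n),
    ∑ j, x ⟨m, h⟩ j = ∑ j, x ⟨0, h0⟩ j + m := by
  intro m
  induction m with
  | zero => intro h; simp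
  | succ m ih =>
    intro h
    have hm : m < n := by omega
    have h2 := hx.2 ⟨m, hm⟩ (by simpa using h)
    have hs : succA x ⟨m, hm⟩ = x ⟨m + 1, h⟩ := by
      unfold succA
      exact dif_pos h
    rw [hs] at h2
    rw [h2, ih hm]
    push_cast
    ring

lemma lvl_le (hx : IsAlcove x) (j : Fin n) : ∀ m2 (h2 : m2 < n) m1 (h1 : m1 ≤ m2) (hm1 : m1 < n),
    x ⟨m1, hm1⟩ j ≤ x ⟨m2, h2⟩ j := by
  intro m2
  induction m2 with
  | zero =>
    intro h2 m1 h1 hm1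
    have he : m1 = 0 := by omega
    subst he
    exact le_refl _
  | succ m ih =>
    intro h2 m1 h1 hm1
    have hm : m < n := by omega
    have hstep : x ⟨m, hm⟩ j ≤ x ⟨m + 1, h2⟩ j := by
      have h3 := hx.1 ⟨m, hm⟩ j
      have hs : succA x ⟨m, hm⟩ = x ⟨m + 1, h2⟩ := by
        unfold succA
        exact dif_pos h2
      rwa [hs] at h3
    rcases Nat.eq_or_lt_of_le h1 with he | hlt
    · subst he; exact le_refl _
    · exact le_trans (ih hm m1 (by omega) hm1) hstep

lemma lvl_le_top (hx : IsAlcove x) (hn : 0 < n) (m : ℕ) (h : m < n) (j : Fin n) :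
    x ⟨m, h⟩ j ≤ x ⟨0, hn⟩ j + 1 := by
  have h1 : x ⟨m, h⟩ j ≤ x ⟨n - 1, by omega⟩ j := lvl_le x hx j (n - 1) (by omega) m (by omega) h
  have h2 := hx.1 ⟨n - 1, by omega⟩ j
  have hs : succA x ⟨n - 1, by omega⟩ = fun j => x ⟨0, hn⟩ j + 1 := by
    unfold succA
    rw [dif_neg (by simp; omega)]
  rw [hs] at h2
  exact le_trans h1 h2

/-- the permutation attached to an alcove -/
noncomputable def pfun (i : Fin n) : Fin n :=
  if h : ∃ p : Fin n, ∀ j, succA x i j = x i j + ev n p j then h.choose else i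

lemma sum_succA (hx : IsAlcove x) (i : Fin n) : ∑ j, succA x i j = ∑ j, x i j + 1 := by
  by_cases h : (i : ℕ) + 1 < n
  · exact hx.2 i h
  · have hs : succA x i = fun j => x ⟨0, i.pos⟩ j + 1 := by
      unfold succA
      rw [dif_neg h]
    rw [hs]
    have hi : (i : ℕ) = n - 1 := by have := i.isLt; omega
    have h1 : ∑ j, x i j = ∑ j, x ⟨0, i.pos⟩ j + ((n : ℤ) - 1) := by
      have h2 := sum_lvl x hx i.pos (i : ℕ) i.isLt
      rw [Fin.eta] at h2
      rw [h2]
      have hn : 1 ≤ n := i.pos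
      have : ((i : ℕ) : ℤ) = (n : ℤ) - 1 := by omega
      rw [this]
    rw [Finset.sum_add_distrib, h1]
    simp
    ring

lemma pfun_spec (hx : IsAlcove x) (i : Fin n) :
    ∀ j, succA x i j = x i j + ev n (pfun x i) j := by
  have hex : ∃ p : Fin n, ∀ j, succA x i j = x i j + ev n p j := by
    have h0 : ∀ j, 0 ≤ succA x i j - x i j := fun j => by have := hx.1 i j; omega
    have h1 : ∑ j, (succA x i j - x i j) = 1 := by
      rw [Finset.sum_sub_distrib, sum_succA x hx i]
      ring
    obtain ⟨p, hp⟩ := exists_ind _ h0 h1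
    exact ⟨p, fun j => by have := hp j; unfold ev; omega⟩
  unfold pfun
  rw [dif_pos hex]
  exact hex.choose_spec

lemma pfun_inj_aux (hx : IsAlcove x) (i1 i2 : Fin n) (h12 : (i1 : ℕ) < (i2 : ℕ)) :
    pfun x i1 ≠ pfun x i2 := by
  intro he
  set j := pfun x i1 with hj
  have hp1 : succA x i1 j = x i1 j + 1 := by
    have := pfun_spec x hx i1 j
    unfold ev at this
    simpa [hj] using this
  have hp2 : succA x i2 j = x i2 j + 1 := by
    have := pfun_spec x hx i2 j
    rw [← he] at this
    unfold ev at this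
    simpa using this
  have hn : 0 < n := i1.pos
  have hi1n : (i1 : ℕ) + 1 < n := by have := i2.isLt; omega
  have hs1 : succA x i1 = x ⟨(i1 : ℕ) + 1, hi1n⟩ := by
    unfold succA; exact dif_pos hi1n
  rw [hs1] at hp1
  have e1 : x ⟨0, hn⟩ j ≤ x i1 j := by
    have h5 := lvl_le x hx j (i1 : ℕ) i1.isLt 0 (by omega) hn
    rwa [Fin.eta] at h5
  have e2 : x ⟨(i1 : ℕ) + 1, hi1n⟩ j ≤ x i2 j := by
    have h5 := lvl_le x hx j (i2 : ℕ) i2.isLt ((i1 : ℕ) + 1) (by omega) hi1n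
    rwa [Fin.eta] at h5
  have e3 : succA x i2 j ≤ x ⟨0, hn⟩ j + 1 := by
    by_cases h : (i2 : ℕ) + 1 < n
    · have hs2 : succA x i2 = x ⟨(i2 : ℕ) + 1, h⟩ := by unfold succA; exact dif_pos h
      rw [hs2]
      exact lvl_le_top x hx hn _ h j
    · have hs2 : succA x i2 = fun m => x ⟨0, i2.pos⟩ m + 1 := by unfold succA; rw [dif_neg h]
      rw [hs2]
  omega

lemma pfun_bij (hx : IsAlcove x) : Function.Bijective (pfun x) := by
  rw [← Finite.injective_iff_bijective]
  intro i1 i2 he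
  by_contra hne
  rcases Nat.lt_trichotomy (i1 : ℕ) (i2 : ℕ) with h | h | h
  · exact pfun_inj_aux x hx i1 i2 h he
  · exact hne (Fin.ext h)
  · exact pfun_inj_aux x hx i2 i1 h he.symm

noncomputable def qfun [NeZero n] : Fin n → Fin n := Function.invFun (pfun x)

lemma qfun_pfun [NeZero n] (hx : IsAlcove x) (i : Fin n) : qfun x (pfun x i) = i :=
  Function.leftInverse_invFun (pfun_bij x hx).1 i

lemma pfun_qfun [NeZero n] (hx : IsAlcove x) (j : Fin n) : pfun x (qfun x j) = j :=
  Function.rightInverse_invFun (pfun_bij x hx).2 j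

lemma qfun_eq_iff [NeZero n] (hx : IsAlcove x) (i j : Fin n) : qfun x j = i ↔ j = pfun x i := by
  constructor
  · intro h; rw [← h, pfun_qfun x hx]
  · intro h; rw [h, qfun_pfun x hx]

end Alcove

section Key
variable {n : ℕ} [NeZero n] (x : Fin n → Fin n → ℤ)

lemma val_eq_zero_iff' (a : Fin n) : (a : ℕ) = 0 ↔ a = 0 := by
  constructor
  · intro h; exact Fin.ext (by simp [h, Fin.val_zero n])
  · intro h; simp [h, Fin.val_zero n]

lemma val_sub_one (hn : 2 ≤ n) (a : Fin n) :
    ((a - 1 : Fin n) : ℕ) = if a = 0 then n - 1 else (a : ℕ) - 1 := by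
  have h1 : ((1 : Fin n) : ℕ) = 1 := by rw [Fin.val_one' n, Nat.mod_eq_of_lt hn]
  rw [Fin.sub_def]
  show (n - ((1 : Fin n) : ℕ) + (a : ℕ)) % n = _
  rw [h1]
  by_cases h : a = 0
  · rw [if_pos h, h, Fin.val_zero n]
    simp [Nat.mod_eq_of_lt (show n - 1 < n by omega)]
  · rw [if_neg h]
    have ha : 1 ≤ (a : ℕ) := by
      have := (val_eq_zero_iff' a).not.mpr h
      omega
    have h2 : n - 1 + (a : ℕ) = ((a : ℕ) - 1) + n := by omega
    rw [h2, Nat.add_mod_right, Nat.mod_eq_of_lt (by have := a.isLt; omega)]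

/-- `f` : cyclic distance to the fall step -/
def ffn (i j : Fin n) : ℕ := ((j - i : Fin n) : ℕ)

/-- `r` : cyclic distance to the rise step -/
noncomputable def rrn (i j : Fin n) : ℕ := ffn i (qfun x j)

noncomputable def ccn (i j : Fin n) : ℕ :=
  if rrn x i j < ffn i j then 2 else if rrn x i j = ffn i j then 1 else 0

noncomputable def keyn (i j : Fin n) : ℤ :=
  3 * (n : ℤ) * (x i j - varpi n (i : ℕ) j) + (n : ℤ) * (ccn x i j : ℤ) + (ffn i j : ℤ)

lemma ff_lt (i j : Fin n) : ffn i j < n := (j - i).isLt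

lemma ff_eq_zero_iff (i j : Fin n) : ffn i j = 0 ↔ j = i := by
  unfold ffn
  rw [val_eq_zero_iff', sub_eq_zero]

lemma rr_lt (i j : Fin n) : rrn x i j < n := ff_lt _ _

lemma rr_eq_zero_iff (hx : IsAlcove x) (i j : Fin n) : rrn x i j = 0 ↔ j = pfun x i := by
  unfold rrn
  rw [ff_eq_zero_iff, qfun_eq_iff x hx]

lemma ff_succ (hn : 2 ≤ n) (i j : Fin n) :
    ffn (i + 1) j = if j = i then n - 1 else ffn i j - 1 := by
  unfold ffn
  rw [show j - (i + 1) = (j - i) - 1 from (sub_sub j i 1).symm, val_sub_one hn]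
  by_cases h : j = i
  · rw [if_pos (sub_eq_zero.mpr h), if_pos h]
  · rw [if_neg (fun hc => h (sub_eq_zero.mp hc)), if_neg h]

lemma rr_succ (hn : 2 ≤ n) (hx : IsAlcove x) (i j : Fin n) :
    rrn x (i + 1) j = if j = pfun x i then n - 1 else rrn x i j - 1 := by
  unfold rrn
  rw [ff_succ hn]
  by_cases h : j = pfun x i
  · rw [if_pos ((qfun_eq_iff x hx i j).mpr h), if_pos h]
  · rw [if_neg (fun hc => h ((qfun_eq_iff x hx i j).mp hc)), if_neg h]

lemma val_succ (i : Fin n) (h : (i : ℕ) + 1 < n) : ((i + 1 : Fin n) : ℕ) = (i : ℕ) + 1 := by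
  rw [Fin.add_def]
  have hn : 1 < n := by omega
  have h1 : ((1 : Fin n) : ℕ) = 1 := by rw [Fin.val_one' n, Nat.mod_eq_of_lt hn]
  show ((i : ℕ) + ((1 : Fin n) : ℕ)) % n = _
  rw [h1, Nat.mod_eq_of_lt h]

lemma succ_wrap (i : Fin n) (h : ¬ ((i : ℕ) + 1 < n)) : (i + 1 : Fin n) = 0 := by
  have hi : (i : ℕ) = n - 1 := by have := i.isLt; omega
  apply Fin.ext
  rw [Fin.add_def]
  have h1 : ((1 : Fin n) : ℕ) = 1 % n := Fin.val_one' n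
  show ((i : ℕ) + ((1 : Fin n) : ℕ)) % n = _
  rw [h1, Fin.val_zero n]
  rcases Nat.lt_or_ge 1 n with h2 | h2
  · rw [Nat.mod_eq_of_lt h2, hi]
    have : n - 1 + 1 = n := by omega
    rw [this, Nat.mod_self]
  · have hn1 : n = 1 := by have := i.pos; omega
    subst hn1
    simp

lemma varpi_succ_val (i m : Fin n) :
    varpi n ((i : ℕ) + 1) m - varpi n (i : ℕ) m = if m = i then 1 else 0 := by
  unfold varpi
  by_cases h : m = i
  · subst h
    rw [if_pos (by omega), if_neg (by omega), if_pos rfl]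
    ring
  · have hval : (m : ℕ) ≠ (i : ℕ) := fun hh => h (Fin.ext hh)
    rw [if_neg h]
    by_cases h2 : (m : ℕ) < (i : ℕ)
    · rw [if_pos (by omega), if_pos h2]; ring
    · rw [if_neg (by omega), if_neg h2]; ring

lemma V_succ (hx : IsAlcove x) (i m : Fin n) :
    x (i + 1) m - varpi n ((i + 1 : Fin n) : ℕ) m =
      (x i m - varpi n (i : ℕ) m) + (if m = pfun x i then 1 else 0)
        - (if m = i then 1 else 0) := by
  have hv := varpi_succ_val i m
  by_cases h : (i : ℕ) + 1 < n
  · have h1 : (i + 1 : Fin n) = ⟨(i : ℕ) + 1, h⟩ := Fin.ext (val_succ i h)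
    have h2 : x (i + 1) m = x i m + (if m = pfun x i then 1 else 0) := by
      rw [h1]
      have h3 := pfun_spec x hx i m
      have hs : succA x i = x ⟨(i : ℕ) + 1, h⟩ := by unfold succA; exact dif_pos h
      rw [hs] at h3
      rw [h3]
      unfold ev
      rfl
    have h4 : ((i + 1 : Fin n) : ℕ) = (i : ℕ) + 1 := val_succ i h
    rw [h2, h4]
    omega
  · have h1 : (i + 1 : Fin n) = 0 := succ_wrap i h
    have hi : (i : ℕ) = n - 1 := by have := i.isLt; omega
    have h0 : (⟨0, i.pos⟩ : Fin n) = 0 := Fin.ext (by simp [Fin.val_zero n])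
    have h2 : x 0 m + 1 = x i m + (if m = pfun x i then 1 else 0) := by
      have h3 := pfun_spec x hx i m
      have hs : succA x i = fun m => x ⟨0, i.pos⟩ m + 1 := by unfold succA; rw [dif_neg h]
      rw [hs] at h3
      have h3' : x ⟨0, i.pos⟩ m + 1 = x i m + ev n (pfun x i) m := h3
      rw [← h0]
      exact h3'
    rw [h1]
    have h5 : varpi n ((0 : Fin n) : ℕ) m = 0 := by
      unfold varpi
      rw [Fin.val_zero n, if_neg (by omega)]
    rw [h5]
    have h6 : varpi n (i : ℕ) m = 1 - (if m = i then 1 else 0) := by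
      unfold varpi
      by_cases h7 : m = i
      · rw [if_pos h7, if_neg (by subst h7; omega)]; ring
      · have hval : (m : ℕ) ≠ (i : ℕ) := fun hh => h7 (Fin.ext hh)
        rw [if_pos (by have := m.isLt; omega), if_neg h7]
        ring
    rw [h6]
    omega

lemma cc_le (i j : Fin n) : ccn x i j ≤ 2 := by
  unfold ccn; split_ifs <;> omega

lemma W_bounds (i j : Fin n) :
    0 ≤ (n : ℤ) * (ccn x i j : ℤ) + (ffn i j : ℤ) ∧
      (n : ℤ) * (ccn x i j : ℤ) + (ffn i j : ℤ) < 3 * (n : ℤ) := by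
  have h1 := ff_lt i j
  have h2 := cc_le x i j
  unfold ccn at *
  split_ifs <;> simp <;> push_cast <;> omega

lemma key_lt_of_V_lt {i j k : Fin n}
    (h : x i j - varpi n (i : ℕ) j < x i k - varpi n (i : ℕ) k) :
    keyn x i j < keyn x i k := by
  have hj := W_bounds x i j
  have hk := W_bounds x i k
  unfold keyn
  have h3 : 3 * (n : ℤ) * (x i j - varpi n (i : ℕ) j) + 3 * (n : ℤ) ≤
      3 * (n : ℤ) * (x i k - varpi n (i : ℕ) k) := by
    have := mul_le_mul_of_nonneg_left (show x i j - varpi n (i:ℕ) j + 1 ≤ x i k - varpi n (i:ℕ) k by omega)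
      (show (0:ℤ) ≤ 3 * n by positivity)
    linarith
  linarith

lemma key_V_le {i j k : Fin n} (h : keyn x i j < keyn x i k) :
    x i j - varpi n (i : ℕ) j ≤ x i k - varpi n (i : ℕ) k := by
  by_contra hc
  push_neg at hc
  exact absurd (key_lt_of_V_lt x hc) (by omega)

lemma key_lt_W {i j k : Fin n} (hV : x i j - varpi n (i : ℕ) j = x i k - varpi n (i : ℕ) k) :
    keyn x i j < keyn x i k ↔
      (n : ℤ) * (ccn x i j : ℤ) + (ffn i j : ℤ) < (n : ℤ) * (ccn x i k : ℤ) + (ffn i k : ℤ) := by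
  unfold keyn
  rw [hV]
  constructor <;> intro <;> linarith

end Key

section Step
variable {n : ℕ} [NeZero n] (x : Fin n → Fin n → ℤ)

lemma cc_cases (i j : Fin n) : ccn x i j = 0 ∨ ccn x i j = 1 ∨ ccn x i j = 2 := by
  unfold ccn; split_ifs <;> simp

lemma cc_eq_two_iff (i j : Fin n) : ccn x i j = 2 ↔ rrn x i j < ffn i j := by
  unfold ccn; split_ifs with h1 h2
  · simp [h1]
  · simp; omega
  · simp; omega

lemma cc_eq_one_iff (i j : Fin n) : ccn x i j = 1 ↔ rrn x i j = ffn i j := by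
  unfold ccn; split_ifs with h1 h2
  · simp; omega
  · simp [h2]
  · simp; omega

lemma cc_eq_zero_iff (i j : Fin n) : ccn x i j = 0 ↔ ffn i j < rrn x i j := by
  unfold ccn; split_ifs with h1 h2
  · simp; omega
  · simp; omega
  · simp; omega

lemma key_lt_W' {i j k : Fin n}
    (hV : x i j - varpi n (i : ℕ) j = x i k - varpi n (i : ℕ) k) :
    keyn x i j < keyn x i k ↔
      n * ccn x i j + ffn i j < n * ccn x i k + ffn i k := by
  rw [key_lt_W x hV]
  constructor <;> intro hh <;> exact_mod_cast hh

lemma key_step (hn : 2 ≤ n) (hx : IsAlcove x) (i j k : Fin n) (hjp : j ≠ pfun x i)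
    (h : keyn x i j < keyn x i k) : keyn x (i + 1) j < keyn x (i + 1) k := by
  have hVjk := key_V_le x h
  have hjk : j ≠ k := by rintro rfl; exact lt_irrefl _ h
  have hVj := V_succ x hx i j
  have hVk := V_succ x hx i k
  have hfj := ff_succ hn i j
  have hfk := ff_succ hn i k
  have hrj := rr_succ x hn hx i j
  have hrk := rr_succ x hn hx i k
  by_cases hkp : k = pfun x i
  · by_cases hpi : pfun x i = i
    · -- k = p = i
      have hki : k = i := by rw [hkp, hpi]
      have hji : j ≠ i := by rw [← hpi]; exact hjp
      have hVk' : x (i+1) k - varpi n ((i+1 : Fin n) : ℕ) k = x i k - varpi n (i : ℕ) k := by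
        rw [hVk, if_pos hkp, if_pos hki]; ring
      have hVj' : x (i+1) j - varpi n ((i+1 : Fin n) : ℕ) j = x i j - varpi n (i : ℕ) j := by
        rw [hVj, if_neg hjp, if_neg hji]; ring
      rcases lt_or_eq_of_le hVjk with hlt | heq
      · exact key_lt_of_V_lt x (by rw [hVj', hVk']; exact hlt)
      · have hW := (key_lt_W' x heq).mp h
        have hfk0 : ffn i k = 0 := (ff_eq_zero_iff i k).mpr hki
        have hrk0 : rrn x i k = 0 := (rr_eq_zero_iff x hx i k).mpr hkp
        have hck : ccn x i k = 1 := (cc_eq_one_iff x i k).mpr (by omega)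
        rw [hck, hfk0] at hW
        have hcj : ccn x i j = 0 := by
          rcases cc_cases x i j with h0 | h0 | h0
          · exact h0
          · rw [h0] at hW; omega
          · rw [h0] at hW; omega
        have hfr : ffn i j < rrn x i j := (cc_eq_zero_iff x i j).mp hcj
        have hfj1 : ffn i j ≠ 0 := fun h0 => hji ((ff_eq_zero_iff i j).mp h0)
        have hfj' : ffn (i+1) j = ffn i j - 1 := by rw [hfj, if_neg hji]
        have hrj' : rrn x (i+1) j = rrn x i j - 1 := by rw [hrj, if_neg hjp]
        have hcj' : ccn x (i+1) j = 0 := by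
          rw [cc_eq_zero_iff, hfj', hrj']; omega
        have hfk' : ffn (i+1) k = n - 1 := by rw [hfk, if_pos hki]
        have hrk' : rrn x (i+1) k = n - 1 := by rw [hrk, if_pos hkp]
        have hck' : ccn x (i+1) k = 1 := by rw [cc_eq_one_iff, hfk', hrk']
        have hVe : x (i+1) j - varpi n ((i+1 : Fin n) : ℕ) j =
            x (i+1) k - varpi n ((i+1 : Fin n) : ℕ) k := by rw [hVj', hVk']; exact heq
        rw [key_lt_W' x hVe, hcj', hck', hfj', hfk']
        have h2 := ff_lt i j
        omega
    · -- k = p ≠ i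
      have hki : k ≠ i := by rw [hkp]; exact hpi
      have hVk' : x (i+1) k - varpi n ((i+1 : Fin n) : ℕ) k =
          x i k - varpi n (i : ℕ) k + 1 := by
        rw [hVk, if_pos hkp, if_neg hki]; ring
      apply key_lt_of_V_lt x
      rw [hVk', hVj, if_neg hjp]
      split_ifs <;> omega
  · by_cases hki : k = i
    · -- k = i, k ≠ p
      have hji : j ≠ i := by rw [← hki]; exact hjk
      have hfk0 : ffn i k = 0 := (ff_eq_zero_iff i k).mpr hki
      have hrk0 : rrn x i k ≠ 0 := fun h0 => hkp ((rr_eq_zero_iff x hx i k).mp h0)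
      have hck : ccn x i k = 0 := (cc_eq_zero_iff x i k).mpr (by omega)
      have hVlt : x i j - varpi n (i : ℕ) j < x i k - varpi n (i : ℕ) k := by
        rcases lt_or_eq_of_le hVjk with hlt | heq
        · exact hlt
        · exfalso
          have hW := (key_lt_W' x heq).mp h
          rw [hck, hfk0] at hW
          omega
      have hVk' : x (i+1) k - varpi n ((i+1 : Fin n) : ℕ) k =
          x i k - varpi n (i : ℕ) k - 1 := by
        rw [hVk, if_neg hkp, if_pos hki]; ring
      have hVj' : x (i+1) j - varpi n ((i+1 : Fin n) : ℕ) j = x i j - varpi n (i : ℕ) j := by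
        rw [hVj, if_neg hjp, if_neg hji]; ring
      rcases lt_or_eq_of_le (show x i j - varpi n (i : ℕ) j ≤ x i k - varpi n (i : ℕ) k - 1 by
        omega) with hlt | heq
      · exact key_lt_of_V_lt x (by rw [hVj', hVk']; omega)
      · have hVe : x (i+1) j - varpi n ((i+1 : Fin n) : ℕ) j =
            x (i+1) k - varpi n ((i+1 : Fin n) : ℕ) k := by rw [hVj', hVk']; omega
        rw [key_lt_W' x hVe]
        have hfk' : ffn (i+1) k = n - 1 := by rw [hfk, if_pos hki]
        have hrk' : rrn x (i+1) k = rrn x i k - 1 := by rw [hrk, if_neg hkp]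
        have hck' : ccn x (i+1) k = 2 := by
          rw [cc_eq_two_iff, hfk', hrk']
          have := rr_lt x i k
          omega
        have hfj1 : ffn i j ≠ 0 := fun h0 => hji ((ff_eq_zero_iff i j).mp h0)
        have hfj' : ffn (i+1) j = ffn i j - 1 := by rw [hfj, if_neg hji]
        rw [hck', hfk', hfj']
        have h2 := ff_lt i j
        rcases cc_cases x (i+1) j with h0 | h0 | h0 <;> rw [h0] <;> omega
    · by_cases hji : j = i
      · -- j = i, j ≠ p, k ∉ {i, p}
        have hVj' : x (i+1) j - varpi n ((i+1 : Fin n) : ℕ) j =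
            x i j - varpi n (i : ℕ) j - 1 := by
          rw [hVj, if_neg hjp, if_pos hji]; ring
        have hVk' : x (i+1) k - varpi n ((i+1 : Fin n) : ℕ) k =
            x i k - varpi n (i : ℕ) k := by
          rw [hVk, if_neg hkp, if_neg hki]; ring
        exact key_lt_of_V_lt x (by rw [hVj', hVk']; omega)
      · -- j, k ∉ {i, p}
        have hVj' : x (i+1) j - varpi n ((i+1 : Fin n) : ℕ) j =
            x i j - varpi n (i : ℕ) j := by
          rw [hVj, if_neg hjp, if_neg hji]; ring
        have hVk' : x (i+1) k - varpi n ((i+1 : Fin n) : ℕ) k =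
            x i k - varpi n (i : ℕ) k := by
          rw [hVk, if_neg hkp, if_neg hki]; ring
        rcases lt_or_eq_of_le hVjk with hlt | heq
        · exact key_lt_of_V_lt x (by rw [hVj', hVk']; omega)
        · have hW := (key_lt_W' x heq).mp h
          have hVe : x (i+1) j - varpi n ((i+1 : Fin n) : ℕ) j =
              x (i+1) k - varpi n ((i+1 : Fin n) : ℕ) k := by rw [hVj', hVk']; exact heq
          rw [key_lt_W' x hVe]
          have hfj1 : ffn i j ≠ 0 := fun h0 => hji ((ff_eq_zero_iff i j).mp h0)
          have hfk1 : ffn i k ≠ 0 := fun h0 => hki ((ff_eq_zero_iff i k).mp h0)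
          have hrj1 : rrn x i j ≠ 0 := fun h0 => hjp ((rr_eq_zero_iff x hx i j).mp h0)
          have hrk1 : rrn x i k ≠ 0 := fun h0 => hkp ((rr_eq_zero_iff x hx i k).mp h0)
          have hfj' : ffn (i+1) j = ffn i j - 1 := by rw [hfj, if_neg hji]
          have hfk' : ffn (i+1) k = ffn i k - 1 := by rw [hfk, if_neg hki]
          have hrj' : rrn x (i+1) j = rrn x i j - 1 := by rw [hrj, if_neg hjp]
          have hrk' : rrn x (i+1) k = rrn x i k - 1 := by rw [hrk, if_neg hkp]
          have hcj' : ccn x (i+1) j = ccn x i j := by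
            unfold ccn
            rw [hfj', hrj']
            split_ifs <;> omega
          have hck' : ccn x (i+1) k = ccn x i k := by
            unfold ccn
            rw [hfk', hrk']
            split_ifs <;> omega
          rw [hcj', hck', hfj', hfk']
          have hA : ∃ A, A = n * ccn x i j := ⟨_, rfl⟩
          have hB : ∃ B, B = n * ccn x i k := ⟨_, rfl⟩
          obtain ⟨A, hA⟩ := hA
          obtain ⟨B, hB⟩ := hB
          rw [← hA, ← hB] at hW ⊢
          omega

end Step

section Rank
variable {n : ℕ} [NeZero n] (x : Fin n → Fin n → ℤ)

lemma key_inj (i : Fin n) : Function.Injective (keyn x i) := by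
  intro j k h
  have hVe : x i j - varpi n (i : ℕ) j = x i k - varpi n (i : ℕ) k := by
    rcases lt_trichotomy (x i j - varpi n (i : ℕ) j) (x i k - varpi n (i : ℕ) k) with h1 | h1 | h1
    · exact absurd (key_lt_of_V_lt x h1) (by omega)
    · exact h1
    · exact absurd (key_lt_of_V_lt x h1) (by omega)
  have hW : (n : ℤ) * (ccn x i j : ℤ) + (ffn i j : ℤ) =
      (n : ℤ) * (ccn x i k : ℤ) + (ffn i k : ℤ) := by
    unfold keyn at h
    rw [hVe] at h
    linarith
  have hfj := ff_lt i j
  have hfk := ff_lt i k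
  have hf : ffn i j = ffn i k := by
    rcases cc_cases x i j with h0 | h0 | h0 <;> rcases cc_cases x i k with h2 | h2 | h2 <;>
      rw [h0, h2] at hW <;> push_cast at hW <;> omega
  have : j - i = k - i := Fin.ext hf
  have h3 := congrArg (fun a => a + i) this
  simpa using h3

noncomputable def rkn (i j : Fin n) : ℕ := (univ.filter (fun k => keyn x i j < keyn x i k)).card

noncomputable def Sn (t : ℕ) (i : Fin n) : Finset (Fin n) := univ.filter (fun j => rkn x i j < t)

lemma rk_lt (i j : Fin n) : rkn x i j < n := by
  have hsub : (univ.filter (fun k => keyn x i j < keyn x i k)) ⊆ univ.erase j := by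
    intro m hm
    rw [Finset.mem_erase]
    refine ⟨?_, mem_univ m⟩
    intro hmj
    subst hmj
    have := (Finset.mem_filter.mp hm).2
    omega
  have h1 := Finset.card_le_card hsub
  have h2 : (univ.erase j).card = n - 1 := by
    rw [Finset.card_erase_of_mem (mem_univ j)]
    simp
  have h3 : 0 < n := n.pos_of_neZero
  unfold rkn
  omega

lemma rk_strict {i j k : Fin n} (h : keyn x i j < keyn x i k) : rkn x i k < rkn x i j := by
  apply Finset.card_lt_card
  rw [Finset.ssubset_iff_of_subset (fun m hm => Finset.mem_filter.mpr
    ⟨mem_univ m, lt_trans h (Finset.mem_filter.mp hm).2⟩)]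
  exact ⟨k, Finset.mem_filter.mpr ⟨mem_univ k, h⟩,
    fun hc => absurd (Finset.mem_filter.mp hc).2 (lt_irrefl _)⟩

lemma rk_inj (i : Fin n) : Function.Injective (rkn x i) := by
  intro j k h
  rcases lt_trichotomy (keyn x i j) (keyn x i k) with h1 | h1 | h1
  · have := rk_strict x h1; omega
  · exact key_inj x i h1
  · have := rk_strict x h1; omega

lemma card_Sn (t : ℕ) (ht : t ≤ n) (i : Fin n) : (Sn x t i).card = t := by
  classical
  have himg : univ.image (rkn x i) = Finset.range n := by
    apply Finset.eq_of_subset_of_card_le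
    · intro m hm
      obtain ⟨j, _, rfl⟩ := Finset.mem_image.mp hm
      exact Finset.mem_range.mpr (rk_lt x i j)
    · rw [Finset.card_range, Finset.card_image_of_injective _ (rk_inj x i)]
      simp
  have h1 : (Sn x t i).card = ((Sn x t i).image (rkn x i)).card :=
    (Finset.card_image_of_injective _ (rk_inj x i)).symm
  rw [h1]
  have h2 : (Sn x t i).image (rkn x i) = (univ.image (rkn x i)).filter (fun m => m < t) := by
    rw [Finset.filter_image]
    rfl
  rw [h2, himg]
  have h3 : (Finset.range n).filter (fun m => m < t) = Finset.range t := by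
    ext m
    simp only [Finset.mem_filter, Finset.mem_range]
    omega
  rw [h3, Finset.card_range]

lemma Sn_top (t : ℕ) (i : Fin n) {j k : Fin n} (hj : j ∈ Sn x t i) (hk : k ∉ Sn x t i) :
    keyn x i k < keyn x i j := by
  have hj' : rkn x i j < t := (Finset.mem_filter.mp hj).2
  have hk' : ¬ rkn x i k < t := fun hc => hk (Finset.mem_filter.mpr ⟨mem_univ k, hc⟩)
  rcases lt_trichotomy (keyn x i k) (keyn x i j) with h1 | h1 | h1
  · exact h1
  · exact absurd (key_inj x i h1) (fun hc => hk' (hc ▸ hj'))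
  · have := rk_strict x h1; omega

lemma Sn_step (hn : 2 ≤ n) (hx : IsAlcove x) (t : ℕ) (i : Fin n) {j : Fin n}
    (hj : j ∈ Sn x t (i + 1)) (hjp : j ≠ pfun x i) : j ∈ Sn x t i := by
  have hj' : rkn x (i + 1) j < t := (Finset.mem_filter.mp hj).2
  have hsub : (univ.filter (fun k => keyn x i j < keyn x i k)) ⊆
      (univ.filter (fun k => keyn x (i + 1) j < keyn x (i + 1) k)) := by
    intro m hm
    exact Finset.mem_filter.mpr ⟨mem_univ m,
      key_step x hn hx i j m hjp (Finset.mem_filter.mp hm).2⟩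
  have h1 : rkn x i j ≤ rkn x (i + 1) j := Finset.card_le_card hsub
  exact Finset.mem_filter.mpr ⟨mem_univ j, by omega⟩

end Rank

section Final
variable {n : ℕ} [NeZero n] (x : Fin n → Fin n → ℤ)

lemma x_succ_pos (hx : IsAlcove x) (i : Fin n) (h : (i : ℕ) + 1 < n) (j : Fin n) :
    x (i + 1) j = x i j + (if j = pfun x i then 1 else 0) := by
  have h1 : (i + 1 : Fin n) = ⟨(i : ℕ) + 1, h⟩ := Fin.ext (val_succ i h)
  have hs : succA x i = x ⟨(i : ℕ) + 1, h⟩ := by unfold succA; exact dif_pos h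
  have h3 := pfun_spec x hx i j
  rw [hs] at h3
  rw [h1, h3]
  rfl

lemma x_succ_wrap (hx : IsAlcove x) (i : Fin n) (h : ¬ ((i : ℕ) + 1 < n)) (j : Fin n) :
    x (i + 1) j + 1 = x i j + (if j = pfun x i then 1 else 0) := by
  have h1 : (i + 1 : Fin n) = 0 := succ_wrap i h
  have h0 : (⟨0, i.pos⟩ : Fin n) = (0 : Fin n) := Fin.ext (by simp [Fin.val_zero n])
  have hs : succA x i = fun m => x ⟨0, i.pos⟩ m + 1 := by unfold succA; rw [dif_neg h]
  have h3 := pfun_spec x hx i j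
  rw [hs] at h3
  have h3' : x ⟨0, i.pos⟩ j + 1 = x i j + ev n (pfun x i) j := h3
  rw [h1, ← h0]
  exact h3'

lemma sum_varpi (t : ℕ) (ht : t ≤ n) : ∑ j : Fin n, varpi n t j = t := by
  unfold varpi
  rw [Finset.sum_boole, card_filter_val_lt, min_eq_left ht]

lemma prefix_split (μ lam : Fin n → ℤ) (t : ℕ) (htn : t ≤ n)
    (heq : ∀ j, lam j = μ j + varpi n t j) (m : ℕ) :
    ∑ j ∈ univ.filter (fun j : Fin n => (j : ℕ) < m), lam j = Mpre μ m + (min m t : ℕ) := by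
  classical
  have h1 : ∑ j ∈ univ.filter (fun j : Fin n => (j : ℕ) < m), lam j =
      ∑ j ∈ univ.filter (fun j : Fin n => (j : ℕ) < m), μ j +
      ∑ j ∈ univ.filter (fun j : Fin n => (j : ℕ) < m), varpi n t j := by
    rw [← Finset.sum_add_distrib]
    exact Finset.sum_congr rfl (fun j _ => heq j)
  have h2 : ∑ j ∈ univ.filter (fun j : Fin n => (j : ℕ) < m), varpi n t j = (min m t : ℕ) := by
    unfold varpi
    rw [Finset.sum_boole, Finset.filter_filter]
    have h3 : (univ.filter (fun j : Fin n => (j : ℕ) < m ∧ (j : ℕ) < t)) =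
        (univ.filter (fun j : Fin n => (j : ℕ) < min m t)) := by
      apply Finset.filter_congr
      intro j _
      omega
    rw [h3, card_filter_val_lt, min_eq_left (by omega : min m t ≤ n)]
  rw [h1, h2]
  rfl

end Final


theorem convolve_comb (n : ℕ) (μ lam : Fin n → ℤ) (t : ℕ) (ht : 1 ≤ t) (htn : t ≤ n - 1)
    (hμ : IsDominant μ) (hlam : IsDominant lam)
    (heq : ∀ j, lam j = μ j + varpi n t j)
    (x : Fin n → Fin n → ℤ) (hx : IsAlcove x) (hxperm : Permissible lam x) :
    ∃ y : Fin n → Fin n → ℤ, IsAlcove y ∧ Permissible μ y ∧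
      ∀ i : Fin n, domOf (fun j => x i j - y i j) = varpi n t := by
  classical
  have hn2 : 2 ≤ n := by
    rcases n with _ | _ | n
    · omega
    · omega
    · omega
  haveI : NeZero n := ⟨by omega⟩
  have htn' : t ≤ n := by omega
  refine ⟨fun i j => x i j - (if j ∈ Sn x t i then (1 : ℤ) else 0), ⟨?_, ?_⟩, ?_, ?_⟩
  · -- coordinatewise inequalities
    intro i j
    have hst : (if j ∈ Sn x t (i + 1) then (1 : ℤ) else 0) ≤
        (if j = pfun x i then 1 else 0) + (if j ∈ Sn x t i then 1 else 0) := by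
      by_cases h1 : j ∈ Sn x t (i + 1)
      · by_cases h2 : j = pfun x i
        · rw [if_pos h1, if_pos h2]
          split_ifs <;> norm_num
        · rw [if_pos h1, if_neg h2, if_pos (Sn_step x hn2 hx t i h1 h2)]
          norm_num
      · rw [if_neg h1]
        split_ifs <;> norm_num
    by_cases h : (i : ℕ) + 1 < n
    · have hsy : succA (fun i j => x i j - (if j ∈ Sn x t i then (1 : ℤ) else 0)) i j
          = x (i + 1) j - (if j ∈ Sn x t (i + 1) then (1 : ℤ) else 0) := by
        unfold succA
        rw [dif_pos h]
        have h1 : (i + 1 : Fin n) = ⟨(i : ℕ) + 1, h⟩ := Fin.ext (val_succ i h)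
        rw [h1]
      rw [hsy]
      have hxp := x_succ_pos x hx i h j
      show x i j - _ ≤ _
      omega
    · rw [succ_wrap i h] at hst
      have hw := x_succ_wrap x hx i h j
      rw [succ_wrap i h] at hw
      have hsy : succA (fun i j => x i j - (if j ∈ Sn x t i then (1 : ℤ) else 0)) i j
          = x (0 : Fin n) j - (if j ∈ Sn x t (0 : Fin n) then (1 : ℤ) else 0) + 1 := by
        unfold succA
        rw [dif_neg h]
        have h0 : (⟨0, i.pos⟩ : Fin n) = (0 : Fin n) := Fin.ext (by simp [Fin.val_zero n])
        rw [h0]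
      rw [hsy]
      show x i j - _ ≤ _
      omega
  · -- sum condition
    intro i h
    have hc : ∀ i' : Fin n, ∑ j, (x i' j - (if j ∈ Sn x t i' then (1 : ℤ) else 0)) =
        ∑ j, x i' j - t := by
      intro i'
      rw [Finset.sum_sub_distrib]
      congr 1
      rw [Finset.sum_boole, Finset.filter_mem_eq_inter, Finset.univ_inter, card_Sn x t htn' i']
    have hsy : succA (fun i j => x i j - (if j ∈ Sn x t i then (1 : ℤ) else 0)) i
        = fun j => x ⟨(i : ℕ) + 1, h⟩ j - (if j ∈ Sn x t ⟨(i : ℕ) + 1, h⟩ then (1 : ℤ) else 0) := by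
      unfold succA
      exact dif_pos h
    rw [hsy]
    have hxseq : succA x i = x ⟨(i : ℕ) + 1, h⟩ := by unfold succA; exact dif_pos h
    have h2 := hx.2 i h
    rw [hxseq] at h2
    show ∑ j, (x ⟨(i : ℕ) + 1, h⟩ j - (if j ∈ Sn x t ⟨(i : ℕ) + 1, h⟩ then (1 : ℤ) else 0))
        = (∑ j, (x i j - (if j ∈ Sn x t i then (1 : ℤ) else 0))) + 1
    rw [hc ⟨(i : ℕ) + 1, h⟩, hc i, h2]
    ring
  · -- Permissible μ y
    intro i
    show DomLE (domOf (fun j => (x i j - (if j ∈ Sn x t i then (1 : ℤ) else 0))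
      - varpi n (i : ℕ) j)) μ
    have hfg : (fun j => (x i j - (if j ∈ Sn x t i then (1 : ℤ) else 0)) - varpi n (i : ℕ) j)
        = (fun j => (x i j - varpi n (i : ℕ) j) - (if j ∈ Sn x t i then (1 : ℤ) else 0)) :=
      funext fun j => by ring
    rw [hfg]
    have hcS := card_Sn x t htn' i
    constructor
    · rw [sum_domOf]
      have h1 := (hxperm i).1
      rw [sum_domOf] at h1
      have h2 : ∑ j, lam j = ∑ j, μ j + t := by
        rw [Finset.sum_congr rfl (fun j _ => heq j), Finset.sum_add_distrib, sum_varpi t htn']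
      have h3 : ∑ j, ((x i j - varpi n (i : ℕ) j) - (if j ∈ Sn x t i then (1 : ℤ) else 0)) =
          ∑ j, (x i j - varpi n (i : ℕ) j) - t := by
        rw [Finset.sum_sub_distrib]
        congr 1
        rw [Finset.sum_boole, Finset.filter_mem_eq_inter, Finset.univ_inter, hcS]
      rw [h3]
      omega
    · intro k
      set w := fun j => (x i j - varpi n (i : ℕ) j) - (if j ∈ Sn x t i then (1 : ℤ) else 0)
        with hwdef
      set σ := Tuple.sort (fun m => -w m) with hσ
      have hL : ∑ j ∈ Finset.Iic k, domOf w j = ∑ m ∈ (Finset.Iic k).image σ, w m := by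
        rw [Finset.sum_image (fun a _ b _ hab => σ.injective hab)]
        exact Finset.sum_congr rfl (fun j _ => rfl)
      have hcard : ((Finset.Iic k).image σ).card = (k : ℕ) + 1 := by
        rw [Finset.card_image_of_injective _ σ.injective, Fin.card_Iic]
      have hbound : ∀ B : Finset (Fin n), ∑ j ∈ B, (x i j - varpi n (i : ℕ) j) ≤
          Mpre μ B.card + (min B.card t : ℕ) := by
        intro B
        have h1 := subset_sum_le _ lam (hxperm i) B
        have h2 := prefix_split μ lam t htn' heq B.card
        rw [h2] at h1
        exact h1
      have htop : ∀ j ∈ Sn x t i, ∀ m, m ∉ Sn x t i →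
          (x i m - varpi n (i : ℕ) m) ≤ (x i j - varpi n (i : ℕ) j) :=
        fun j hj m hm => key_V_le x (Sn_top x t i hj hm)
      have hrem := removal μ t hμ ht (fun j => x i j - varpi n (i : ℕ) j) (Sn x t i)
        hcS htop hbound ((Finset.Iic k).image σ)
      rw [hcard] at hrem
      have hMk : Mpre μ ((k : ℕ) + 1) = ∑ j ∈ Finset.Iic k, μ j := by
        unfold Mpre
        congr 1
        ext j
        simp only [Finset.mem_filter, Finset.mem_univ, true_and, Finset.mem_Iic, Fin.le_def]
        omega
      rw [hL, ← hMk]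
      exact hrem
  · -- relative position
    intro i
    show domOf (fun j => x i j - (x i j - (if j ∈ Sn x t i then (1 : ℤ) else 0))) = varpi n t
    have hfg : (fun j => x i j - (x i j - (if j ∈ Sn x t i then (1 : ℤ) else 0)))
        = (fun j => if j ∈ Sn x t i then (1 : ℤ) else 0) := funext fun j => by ring
    rw [hfg]
    exact domOf_indicator (Sn x t i) t (card_Sn x t htn' i)
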